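/- Extended descent lemma under relative smoothness: Let E be a real inner product space, Z ⊆ E a convex set, and let f, h : E → ℝ be differentiable on an open set containing Z, with gradients ∇f and ∇h. If L > 0 is such that both x ↦ L·h(x) − f(x) and x ↦ L·h(x) + f(x) are convex on Z, then for all x, y ∈ Z one has |f(x) − f(y) − ⟨∇f(y), x − y⟩| ≤ L·D_h(x, y), where D_h(x, y) := h(x) − h(y) − ⟨∇h(y), x − y⟩. -/

import Mathlib

open RealInnerProductSpace

/-- Gradient inequality for a convex function: `⟪∇g y, x - y⟫ ≤ g x - g y`. -/
lemma convex_grad_ineq {E : Type*} [NormedAddCommGroup E] [InnerProductSpace ℝ E] [CompleteSpace E]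
    {Z : Set E} {g : E → ℝ} {v : E} {x y : E} (hx : x ∈ Z) (hy : y ∈ Z)
    (hg : HasGradientAt g v y) (hc : ConvexOn ℝ Z g) :
    ⟪v, x - y⟫ ≤ g x - g y := by
  set φ : ℝ → ℝ := fun t => g (y + t • (x - y)) with hφ
  have hline : HasDerivAt (fun t : ℝ => y + t • (x - y)) (x - y) 0 := by
    simpa using (hasDerivAt_id (0 : ℝ)).smul_const (x - y) |>.const_add y
  have hfd : HasFDerivAt g ((InnerProductSpace.toDual ℝ E) v) y :=
    (hasGradientAt_iff_hasFDerivAt).mp hg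
  have hfd' : HasFDerivAt g ((InnerProductSpace.toDual ℝ E) v) (y + (0:ℝ) • (x - y)) := by
    simpa using hfd
  have hderiv : HasDerivAt φ ⟪v, x - y⟫ 0 := by
    have := hfd'.comp_hasDerivAt (0 : ℝ) hline
    simp only [InnerProductSpace.toDual_apply_apply] at this
    exact this
  have htend : Filter.Tendsto (slope φ 0) (nhdsWithin 0 (Set.Ioi 0)) (nhds ⟪v, x - y⟫) := by
    have h1 := hasDerivAt_iff_tendsto_slope.mp hderiv
    exact h1.mono_left (nhdsWithin_mono 0 (fun t ht => Set.mem_compl_singleton_iff.mpr (ne_of_gt ht)))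
  have hev : ∀ᶠ t in nhdsWithin (0:ℝ) (Set.Ioi 0), slope φ 0 t ≤ g x - g y := by
    filter_upwards [Ioc_mem_nhdsGT (one_pos : (0:ℝ) < 1)] with t ht
    obtain ⟨ht0, ht1⟩ := ht
    have hmem : φ t ≤ (1 - t) * g y + t * g x := by
      have := hc.2 hy hx (by linarith : (0:ℝ) ≤ 1 - t) ht0.le (by ring)
      have heq : (1 - t) • y + t • x = y + t • (x - y) := by
        simp [smul_sub, sub_smul]; abel
      simpa [φ, heq] using this
    have hφ0 : φ 0 = g y := by simp [φ]
    rw [slope_def_field]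
    rw [div_le_iff₀ (by linarith : (0:ℝ) < t - 0)]
    nlinarith
  exact le_of_tendsto htend hev

/-- **Extended descent lemma under relative smoothness.**
If `L • h ± f` are convex on a convex set `Z`, then
`|f x - f y - ⟪∇f y, x - y⟫| ≤ L * D_h(x, y)` for all `x, y ∈ Z`,
where `D_h(x, y) = h x - h y - ⟪∇h y, x - y⟫`. -/
theorem extended_descent_lemma
    {E : Type*} [NormedAddCommGroup E] [InnerProductSpace ℝ E] [CompleteSpace E]
    (Z U : Set E) (hZconv : Convex ℝ Z) (hUopen : IsOpen U) (hZU : Z ⊆ U)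
    (f h : E → ℝ) (f' h' : E → E)
    (hfgrad : ∀ x ∈ U, HasGradientAt f (f' x) x)
    (hhgrad : ∀ x ∈ U, HasGradientAt h (h' x) x)
    (L : ℝ) (hL : 0 < L)
    (hconv₁ : ConvexOn ℝ Z (fun x => L * h x - f x))
    (hconv₂ : ConvexOn ℝ Z (fun x => L * h x + f x)) :
    ∀ x ∈ Z, ∀ y ∈ Z,
      |f x - f y - ⟪f' y, x - y⟫| ≤ L * (h x - h y - ⟪h' y, x - y⟫) := by
  intro x hx y hy
  have hyU := hZU hy
  have hf := hfgrad y hyU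
  have hh := hhgrad y hyU
  have hffd := (hasGradientAt_iff_hasFDerivAt).mp hf
  have hhfd := (hasGradientAt_iff_hasFDerivAt).mp hh
  have hg1 : HasGradientAt (fun z => L * h z - f z) (L • h' y - f' y) y := by
    rw [hasGradientAt_iff_hasFDerivAt]
    have := (hhfd.const_mul L).sub hffd
    refine this.congr_fderiv ?_
    ext w
    simp [inner_sub_left, real_inner_smul_left, mul_comm]
  have hg2 : HasGradientAt (fun z => L * h z + f z) (L • h' y + f' y) y := by
    rw [hasGradientAt_iff_hasFDerivAt]
    have := (hhfd.const_mul L).add hffd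
    refine this.congr_fderiv ?_
    ext w
    simp [inner_add_left, real_inner_smul_left, mul_comm]
  have h1 := convex_grad_ineq hx hy hg1 hconv₁
  have h2 := convex_grad_ineq hx hy hg2 hconv₂
  rw [inner_sub_left, real_inner_smul_left] at h1
  rw [inner_add_left, real_inner_smul_left] at h2
  rw [abs_le]
  constructor <;> [linarith; linarith]
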